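/- Let W[1..m] be a sequence of m ≥ 1 binary strings of length ℓ ≥ 1, with s(i) as in the definition of SeqToString, and let T = SeqToString_ℓ(W). Fix X ∈ {0,1}^{≤ℓ} and b, e ∈ [0..m] with b < e, and set P₁ = rev(X)·4·s(b) and P₂ = rev(X)·4·s(e). Then PrefixRank(W,e,X) − PrefixRank(W,b,X) = |LexRange(P₁,P₂,T)|. -/

import Mathlib

/-- Strict lexicographic order on strings: `U ≺ V` iff `U` is a proper prefix of `V`,
or `U` and `V` first differ at a position where `U` has the smaller symbol. -/
def LexLt {α : Type*} [LT α] (U V : List α) : Prop := List.Lex (· < ·) U V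

/-- Non-strict lexicographic order on strings. -/
def LexLe {α : Type*} [LT α] (U V : List α) : Prop := LexLt U V ∨ U = V

/-- The suffix `T[j..|T|]` of `T` (1-based index `j`). -/
def Suf {α : Type*} (T : List α) (j : ℕ) : List α := T.drop (j - 1)

/-- `Occ P T` is the set of starting positions (1-based) of occurrences of `P` in `T`. -/
def Occ {α : Type*} (P T : List α) : Set ℕ :=
  { j | 1 ≤ j ∧ j + P.length ≤ T.length + 1 ∧ (Suf T j).take P.length = P }

/-- `RangeBeg P T` = number of suffixes of `T` lexicographically smaller than `P`. -/
noncomputable def RangeBeg {α : Type*} [LT α] (P T : List α) : ℕ :=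
  { j | 1 ≤ j ∧ j ≤ T.length ∧ LexLt (Suf T j) P }.ncard

/-- `RangeEnd P T = RangeBeg P T + |Occ P T|`. -/
noncomputable def RangeEnd {α : Type*} [LT α] (P T : List α) : ℕ :=
  RangeBeg P T + (Occ P T).ncard

/-- `LexRange P₁ P₂ T` = positions `j ∈ [1..|T|]` with `P₁ ⪯ T[j..|T|] ≺ P₂`. -/
def LexRange {α : Type*} [LT α] (P₁ P₂ T : List α) : Set ℕ :=
  { j | 1 ≤ j ∧ j ≤ T.length ∧ LexLe P₁ (Suf T j) ∧ LexLt (Suf T j) P₂ }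

/-- `sa` is the suffix array of `T` (1-based): a permutation of `[1..|T|]` listing the
starting positions of the suffixes of `T` in increasing lexicographic order. -/
def IsSuffixArray {α : Type*} [LT α] (T : List α) (sa : ℕ → ℕ) : Prop :=
  (∀ i, 1 ≤ i → i ≤ T.length → 1 ≤ sa i ∧ sa i ≤ T.length) ∧
  (∀ j, 1 ≤ j → j ≤ T.length → ∃ i, 1 ≤ i ∧ i ≤ T.length ∧ sa i = j) ∧
  (∀ i j, 1 ≤ i → i < j → j ≤ T.length → LexLt (Suf T (sa i)) (Suf T (sa j)))

/-- `binSym k x` : the length-`k` binary representation of `x` (MSB first, leading zeros). -/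
def binSym (k x : ℕ) : List ℕ := (List.range k).map fun i => x / 2 ^ (k - 1 - i) % 2

/-- `binStr k S` = `bin_k(S[1]) · bin_k(S[2]) · … · bin_k(S[|S|])`. -/
def binStr (k : ℕ) (S : List ℕ) : List ℕ := (S.map (binSym k)).flatten

/-- `ebinSym k x = 1^{k+1} · 0 · bin_k(x) · 0`. -/
def ebinSym (k x : ℕ) : List ℕ := List.replicate (k + 1) 1 ++ [0] ++ binSym k x ++ [0]

/-- `ebinStr k S` = concatenation of `ebin_k(S[i])` for `i = 1, …, |S|`. -/
def ebinStr (k : ℕ) (S : List ℕ) : List ℕ := (S.map (ebinSym k)).flatten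

/-- `sEnc k i` : length-`k` base-2 representation of `i` with `0 ↦ 2` and `1 ↦ 3`. -/
def sEnc (k i : ℕ) : List ℕ := (binSym k i).map (· + 2)

/-- `SeqToString m W = ⊙_{i=1}^{m} rev(W[i]) · 4 · s(i-1)` with `k = 1 + ⌊log₂ m⌋`. -/
def SeqToString (m : ℕ) (W : ℕ → List ℕ) : List ℕ :=
  ((List.range m).map
    fun i => (W (i + 1)).reverse ++ [4] ++ sEnc (1 + Nat.log 2 m) i).flatten

/-- `PermSeqToString m π W = ⊙_{i=1}^{m} rev(W[π[i]]) · 4 · s(π[i]-1)`. -/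
def PermSeqToString (m : ℕ) (perm : ℕ → ℕ) (W : ℕ → List ℕ) : List ℕ :=
  ((List.range m).map
    fun i => (W (perm (i + 1))).reverse ++ [4]
      ++ sEnc (1 + Nat.log 2 m) (perm (i + 1) - 1)).flatten

/-- `PrefixRank W j X = |{ i ∈ [1..j] : X is a prefix of W[i] }|`. -/
noncomputable def PrefixRank {α : Type*} (W : ℕ → List α) (j : ℕ) (X : List α) : ℕ :=
  { i | 1 ≤ i ∧ i ≤ j ∧ X <+: W i }.ncard

/-- `p` is the `r`-th smallest element of the set `A ⊆ ℕ`. -/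
def IsKthSmallest (A : Set ℕ) (r p : ℕ) : Prop :=
  p ∈ A ∧ (A ∩ Set.Iic p).ncard = r

/-- Ceiling division `⌈a / b⌉` of positive naturals. -/
def cdiv (a b : ℕ) : ℕ := (a + b - 1) / b

/-- Alphabet inversion: `inv_σ(S)[i] = σ - 1 - S[i]`. -/
def invStr (σ : ℕ) (S : List ℕ) : List ℕ := S.map fun a => σ - 1 - a

/-- `p` is a period of `S`: `1 ≤ p ≤ |S|` and `S[i] = S[i+p]` for all `i ∈ [1..|S|-p]`. -/
def IsPeriod {α : Type*} (S : List α) (p : ℕ) : Prop :=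
  1 ≤ p ∧ p ≤ S.length ∧ S.drop p <+: S

/-- `per S`: the smallest period of `S`. -/
noncomputable def per {α : Type*} (S : List α) : ℕ := sInf { p | IsPeriod S p }

/-- `P` is `τ`-periodic: `|P| ≥ 3τ - 1` and `per(P[1..3τ-1]) ≤ τ/3`. -/
noncomputable def TauPeriodic {α : Type*} (τ : ℕ) (P : List α) : Prop :=
  3 * τ ≤ P.length + 1 ∧ 3 * per (P.take (3 * τ - 1)) ≤ τ

/-- `R(τ,T) = { i ∈ [1..n-3τ+2] : per(T[i..i+3τ-2]) ≤ τ/3 }`. -/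
noncomputable def Rset {α : Type*} (τ : ℕ) (T : List α) : Set ℕ :=
  { i | 1 ≤ i ∧ i + 3 * τ ≤ T.length + 2 ∧ 3 * per ((Suf T i).take (3 * τ - 1)) ≤ τ }

/-- `S` is a `τ`-synchronizing set of `T` (consistency and density conditions). -/
noncomputable def IsSyncSet {α : Type*} (τ : ℕ) (T : List α) (S : Set ℕ) : Prop :=
  (∀ j ∈ S, 1 ≤ j ∧ j + 2 * τ ≤ T.length + 1) ∧
  (∀ i j, 1 ≤ i → i + 2 * τ ≤ T.length + 1 → 1 ≤ j → j + 2 * τ ≤ T.length + 1 →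
    (Suf T i).take (2 * τ) = (Suf T j).take (2 * τ) → (i ∈ S ↔ j ∈ S)) ∧
  (∀ i, 1 ≤ i → i + 3 * τ ≤ T.length + 2 → (S ∩ Set.Ico i (i + τ) = ∅ ↔ i ∈ Rset τ T))

/-- `succ_S(x) = min { x' ∈ S : x' ≥ x }`. -/
noncomputable def succS (S : Set ℕ) (x : ℕ) : ℕ := sInf (S ∩ Set.Ici x)

/-- `DistPrefixes(τ,T,S) = { T[j..succ_S(j)+2τ) : j ∈ [1..n-3τ+2] \ R(τ,T) }`. -/
noncomputable def DistPrefixes {α : Type*} (τ : ℕ) (T : List α) (S : Set ℕ) : Set (List α) :=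
  (fun j => (Suf T j).take (succS S j + 2 * τ - j)) ''
    { j | 1 ≤ j ∧ j + 3 * τ ≤ T.length + 2 ∧ j ∉ Rset τ T }

/-- `r` is the value of the prefix RMQ: the smallest index `i ∈ (b..e]` with `X` a prefix of
`W[i]` minimizing `A[i]` (ties broken towards the smaller index). -/
def IsPrefixRMQ (A : ℕ → ℤ) (W : ℕ → List ℕ) (b e : ℕ) (X : List ℕ) (r : ℕ) : Prop :=
  (b < r ∧ r ≤ e ∧ X <+: W r) ∧
  (∀ i, b < i → i ≤ e → X <+: W i → A r ≤ A i) ∧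
  (∀ i, b < i → i ≤ e → X <+: W i → A i = A r → r ≤ i)


namespace Stmt12Aux

lemma lex_cons_cons_iff (a b : ℕ) (u v : List ℕ) :
    (a :: u) < (b :: v) ↔ a < b ∨ (a = b ∧ u < v) := by
  constructor
  · intro h
    cases h with
    | cons h => exact Or.inr ⟨rfl, h⟩
    | rel h => exact Or.inl h
  · rintro (h | ⟨rfl, h⟩)
    · exact List.Lex.rel h
    · exact List.Lex.cons h

lemma not_lt_nil (u : List ℕ) : ¬ u < [] := List.not_lt_nil _

lemma lex_append_iff : ∀ (u v : List ℕ), u.length = v.length → ∀ (w w' : List ℕ),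
    ((u ++ w) < (v ++ w') ↔ u < v ∨ (u = v ∧ w < w'))
  | [], [], _, w, w' => by
      simp only [List.nil_append]
      have : ¬ ([] : List ℕ) < [] := lt_irrefl _
      tauto
  | [], b :: v, h, _, _ => by simp at h
  | a :: u, [], h, _, _ => by simp at h
  | a :: u, b :: v, h, w, w' => by
      simp only [List.length_cons, Nat.add_right_cancel_iff] at h
      simp only [List.cons_append, lex_cons_cons_iff, lex_append_iff u v h w w',
        List.cons.injEq]
      tauto

lemma prefix_of_between : ∀ (C S u v : List ℕ), C ++ u ≤ S → S < C ++ v → C <+: S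
  | [], S, _, _, _, _ => S.nil_prefix
  | a :: C, [], u, v, h1, _ => by
      rcases lt_or_eq_of_le h1 with h | h
      · exact absurd h (not_lt_nil _)
      · simp at h
  | a :: C, s :: S, u, v, h1, h2 => by
      rw [List.cons_append] at h1 h2
      rw [lex_cons_cons_iff] at h2
      rcases lt_or_eq_of_le h1 with h1' | h1'
      · rw [lex_cons_cons_iff] at h1'
        have has : a = s := by
          rcases h1' with h | ⟨h, _⟩ <;> rcases h2 with h' | ⟨h', _⟩ <;> omega
        subst has
        have hle : C ++ u ≤ S := by
          rcases h1' with h | ⟨_, h⟩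
          · omega
          · exact le_of_lt h
        have hlt : S < C ++ v := by
          rcases h2 with h | ⟨_, h⟩
          · omega
          · exact h
        have := prefix_of_between C S u v hle hlt
        exact List.cons_prefix_cons.mpr ⟨rfl, this⟩
      · obtain ⟨rfl, hCu⟩ := List.cons.inj h1'
        exact List.cons_prefix_cons.mpr ⟨rfl, hCu ▸ (C.prefix_append u)⟩

lemma binSym_length (k x : ℕ) : (binSym k x).length = k := by simp [binSym]

lemma binSym_mem_lt (k x : ℕ) : ∀ a ∈ binSym k x, a < 2 := by
  simp only [binSym, List.mem_map, List.mem_range]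
  rintro a ⟨i, _, rfl⟩
  exact Nat.mod_lt _ (by norm_num)

lemma div_pow_mod_two (x k j : ℕ) (h : j < k) : (x % 2 ^ k) / 2 ^ j % 2 = x / 2 ^ j % 2 := by
  obtain ⟨d, rfl⟩ : ∃ d, k = j + (d + 1) := ⟨k - j - 1, by omega⟩
  set q := x / 2 ^ (j + (d + 1)) with hq
  set r := x % 2 ^ (j + (d + 1)) with hr
  have hx : x = r + q * (2 * 2 ^ d) * 2 ^ j := by
    have h0 := Nat.div_add_mod x (2 ^ (j + (d + 1)))
    rw [← h0]; ring
  conv_rhs => rw [hx]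
  rw [Nat.add_mul_div_right _ _ (pow_pos two_pos j)]
  have : q * (2 * 2 ^ d) = 2 * (q * 2 ^ d) := by ring
  rw [this, Nat.add_mul_mod_self_left]

lemma binSym_succ (k x : ℕ) :
    binSym (k + 1) x = (x / 2 ^ k % 2) :: binSym k (x % 2 ^ k) := by
  simp only [binSym, List.range_succ_eq_map, List.map_cons, List.map_map]
  refine congrArg₂ List.cons ?_ ?_
  · norm_num
  · apply List.map_congr_left
    intro i hi
    rw [List.mem_range] at hi
    simp only [Function.comp_apply]
    have h1 : k + 1 - 1 - (i + 1) = k - 1 - i := by omega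
    rw [h1]
    exact (div_pow_mod_two x k (k - 1 - i) (by omega)).symm

lemma lex_map_add2 : ∀ u v : List ℕ, (u.map (· + 2) < v.map (· + 2)) ↔ u < v
  | [], [] => by simp
  | [], b :: v => by
      simp only [List.map_nil, List.map_cons]
      exact ⟨fun _ => List.Lex.nil, fun _ => List.Lex.nil⟩
  | a :: u, [] => by
      constructor <;> (intro h; exact absurd h (List.not_lt_nil _))
  | a :: u, b :: v => by
      simp only [List.map_cons, lex_cons_cons_iff, lex_map_add2 u v]
      constructor
      · rintro (h | ⟨h, h2⟩)
        · exact Or.inl (by omega)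
        · exact Or.inr ⟨by omega, h2⟩
      · rintro (h | ⟨h, h2⟩)
        · exact Or.inl (by omega)
        · exact Or.inr ⟨by omega, h2⟩

lemma bin_lt_iff : ∀ (k x y : ℕ), x < 2 ^ k → y < 2 ^ k →
    (binSym k x < binSym k y ↔ x < y)
  | 0, x, y, hx, hy => by
      interval_cases x
      interval_cases y
      simp [binSym]
  | k + 1, x, y, hx, hy => by
      have hp : 0 < 2 ^ k := pow_pos two_pos k
      have h2 : (2 : ℕ) ^ (k + 1) = 2 ^ k * 2 := pow_succ 2 k
      have hqx : x / 2 ^ k < 2 := Nat.div_lt_iff_lt_mul hp |>.mpr (by omega)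
      have hqy : y / 2 ^ k < 2 := Nat.div_lt_iff_lt_mul hp |>.mpr (by omega)
      have hmx : x / 2 ^ k % 2 = x / 2 ^ k := Nat.mod_eq_of_lt hqx
      have hmy : y / 2 ^ k % 2 = y / 2 ^ k := Nat.mod_eq_of_lt hqy
      have hdx := Nat.div_add_mod x (2 ^ k)
      have hdy := Nat.div_add_mod y (2 ^ k)
      have hrx : x % 2 ^ k < 2 ^ k := Nat.mod_lt _ hp
      have hry : y % 2 ^ k < 2 ^ k := Nat.mod_lt _ hp
      rw [binSym_succ, binSym_succ, lex_cons_cons_iff,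
        bin_lt_iff k _ _ hrx hry, hmx, hmy]
      have hqx' : x / 2 ^ k = 0 ∨ x / 2 ^ k = 1 := by omega
      have hqy' : y / 2 ^ k = 0 ∨ y / 2 ^ k = 1 := by omega
      rcases hqx' with h | h <;> rcases hqy' with h' | h' <;>
        rw [h] at hdx <;> rw [h'] at hdy <;> simp at hdx hdy <;> omega

lemma sEnc_lt_iff (k x y : ℕ) (hx : x < 2 ^ k) (hy : y < 2 ^ k) :
    (sEnc k x < sEnc k y ↔ x < y) := by
  rw [sEnc, sEnc, lex_map_add2, bin_lt_iff k x y hx hy]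

lemma sEnc_length (k x : ℕ) : (sEnc k x).length = k := by simp [sEnc, binSym]

lemma flatten_length {α : Type*} (L : ℕ) : ∀ (bs : List (List α)),
    (∀ b ∈ bs, b.length = L) → bs.flatten.length = bs.length * L
  | [], _ => by simp
  | c :: bs, h => by
    simp only [List.flatten_cons, List.length_append, List.length_cons]
    rw [flatten_length L bs (fun b hb => h b (List.mem_cons_of_mem _ hb)),
      h c (List.mem_cons_self)]
    ring

lemma flatten_drop_mul {α : Type*} (L : ℕ) : ∀ (i : ℕ) (bs : List (List α)),
    (∀ b ∈ bs, b.length = L) → (bs.flatten).drop (i * L) = (bs.drop i).flatten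
  | 0, bs, _ => by simp
  | i + 1, [], _ => by simp
  | i + 1, c :: bs, h => by
    have hc : c.length = L := h c (List.mem_cons_self)
    have step : ((c :: bs).flatten).drop ((i + 1) * L) = (bs.flatten).drop (i * L) := by
      rw [List.flatten_cons, show (i + 1) * L = c.length + i * L by rw [hc]; ring,
        ← List.drop_drop, List.drop_left]
    rw [step, flatten_drop_mul L i bs (fun b hb => h b (List.mem_cons_of_mem _ hb))]
    rfl

end Stmt12Aux

open Stmt12Aux in
theorem stmt12 (m ℓ : ℕ) (hm : 1 ≤ m) (hℓ : 1 ≤ ℓ) (W : ℕ → List ℕ)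
    (hWlen : ∀ i, 1 ≤ i → i ≤ m → (W i).length = ℓ)
    (hWbin : ∀ i, 1 ≤ i → i ≤ m → ∀ a ∈ W i, a < 2)
    (X : List ℕ) (hXlen : X.length ≤ ℓ) (hXbin : ∀ a ∈ X, a < 2)
    (b e : ℕ) (hbe : b < e) (he : e ≤ m) :
    PrefixRank W e X - PrefixRank W b X =
      (LexRange (X.reverse ++ [4] ++ sEnc (1 + Nat.log 2 m) b)
        (X.reverse ++ [4] ++ sEnc (1 + Nat.log 2 m) e) (SeqToString m W)).ncard := by
  classical
  set k := 1 + Nat.log 2 m with hk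
  set K := X.length with hKdef
  set L := ℓ + 1 + k with hLdef
  have hk1 : 1 ≤ k := by omega
  have hKl : K ≤ ℓ := hXlen
  have hL0 : 0 < L := by omega
  have hm2k : m < 2 ^ k := by
    have h := Nat.lt_pow_succ_log_self (by norm_num : 1 < 2) m
    rw [hk, Nat.add_comm]
    exact h
  set blk : ℕ → List ℕ := fun i => (W (i + 1)).reverse ++ [4] ++ sEnc k i with hblk
  set Bs : List (List ℕ) := (List.range m).map blk with hBsdef
  have hT : SeqToString m W = Bs.flatten := rfl
  have hWlen' : ∀ i, i < m → (W (i + 1)).length = ℓ := fun i hi =>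
    hWlen (i + 1) (by omega) (by omega)
  have hblklen : ∀ i, i < m → (blk i).length = L := by
    intro i hi
    simp only [hblk, List.length_append, List.length_reverse, List.length_cons,
      List.length_nil, sEnc_length, hWlen' i hi, hLdef]
  have hBslen : ∀ bl ∈ Bs, bl.length = L := by
    intro bl hbl
    rw [hBsdef] at hbl
    simp only [List.mem_map, List.mem_range] at hbl
    obtain ⟨i, hi, rfl⟩ := hbl
    exact hblklen i hi
  have hTlen : (SeqToString m W).length = m * L := by
    rw [hT, flatten_length L Bs hBslen, hBsdef, List.length_map, List.length_range]
  have hsuf : ∀ i t, i < m → t < L →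
      Suf (SeqToString m W) (i * L + t + 1) = (blk i).drop t ++ (Bs.drop (i + 1)).flatten := by
    intro i t hi ht
    show (SeqToString m W).drop (i * L + t + 1 - 1) = _
    rw [Nat.add_sub_cancel, hT, ← List.drop_drop, flatten_drop_mul L i Bs hBslen]
    have hBsl : i < Bs.length := by simpa [hBsdef] using hi
    rw [List.drop_eq_getElem_cons hBsl, List.flatten_cons]
    have hBsi : Bs[i] = blk i := by simp [hBsdef]
    rw [hBsi, List.drop_append,
      Nat.sub_eq_zero_of_le (by rw [hblklen i hi]; omega), List.drop_zero]
  have hblkdrop : ∀ i, i < m → (blk i).drop (ℓ - K) =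
      ((W (i + 1)).take K).reverse ++ [4] ++ sEnc k i := by
    intro i hi
    have hlen : (W (i + 1)).reverse.length = ℓ := by
      rw [List.length_reverse, hWlen' i hi]
    rw [hblk]
    simp only [List.append_assoc]
    rw [List.drop_append, hlen,
      Nat.sub_eq_zero_of_le (by omega : ℓ - K ≤ ℓ), List.drop_zero]
    have hrev : (W (i + 1)).reverse.drop (ℓ - K) = ((W (i + 1)).take K).reverse := by
      rw [List.reverse_take, hWlen' i hi]
    rw [hrev]
  have hblkget1 : ∀ i s, i < m → s < ℓ → ∃ a, (blk i)[s]? = some a ∧ a < 2 := by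
    intro i s hi hs
    have hlen : (W (i + 1)).reverse.length = ℓ := by
      rw [List.length_reverse, hWlen' i hi]
    have hs' : s < (W (i + 1)).reverse.length := by omega
    refine ⟨(W (i + 1)).reverse[s], ?_, ?_⟩
    · rw [hblk]
      simp only [List.append_assoc]
      rw [List.getElem?_append, if_pos hs']
      exact List.getElem?_eq_getElem hs'
    · apply hWbin (i + 1) (by omega) (by omega)
      rw [← List.mem_reverse]
      exact List.getElem_mem hs'
  have hblkget2 : ∀ i s, i < m → ℓ < s → s < L → ∃ a, (blk i)[s]? = some a ∧ a < 4 := by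
    intro i s hi hs hsL
    have hlen : ((W (i + 1)).reverse ++ [4]).length = ℓ + 1 := by
      simp [hWlen' i hi]
    have hs2 : s - (ℓ + 1) < (sEnc k i).length := by rw [sEnc_length]; omega
    refine ⟨(sEnc k i)[s - (ℓ + 1)], ?_, ?_⟩
    · rw [hblk]
      simp only []
      rw [List.getElem?_append, if_neg (by rw [hlen]; omega), hlen]
      exact List.getElem?_eq_getElem hs2
    · have hlt4 : ∀ a ∈ sEnc k i, a < 4 := by
        intro a ha
        simp only [sEnc, List.mem_map] at ha
        obtain ⟨a0, ha0, rfl⟩ := ha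
        have := binSym_mem_lt k i a0 ha0
        omega
      exact hlt4 _ (List.getElem_mem hs2)
  have hblkget3 : ∀ i, i < m → (blk i)[ℓ]? = some 4 := by
    intro i hi
    have hlen : (W (i + 1)).reverse.length = ℓ := by
      rw [List.length_reverse, hWlen' i hi]
    rw [hblk]
    simp only [List.append_assoc]
    rw [List.getElem?_append, if_neg (by omega), hlen, Nat.sub_self]
    simp
  have hlexlt : ∀ u v : List ℕ, LexLt u v ↔ u < v := fun _ _ => Iff.rfl
  have hlexle : ∀ u v : List ℕ, LexLe u v ↔ u ≤ v := by
    intro u v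
    show (u < v ∨ u = v) ↔ u ≤ v
    exact le_iff_lt_or_eq.symm
  have horder : ∀ (rest : List ℕ) (i c : ℕ), i < 2 ^ k → c < 2 ^ k →
      ((X.reverse ++ [4] ++ sEnc k i ++ rest) < (X.reverse ++ [4] ++ sEnc k c) ↔ i < c) := by
    intro rest i c hi hc
    have h1 : X.reverse ++ [4] ++ sEnc k i ++ rest
        = (X.reverse ++ [4]) ++ (sEnc k i ++ rest) := by rw [List.append_assoc]
    have h2 : X.reverse ++ [4] ++ sEnc k c
        = (X.reverse ++ [4]) ++ (sEnc k c ++ []) := by rw [List.append_nil]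
    rw [h1, h2, lex_append_iff (X.reverse ++ [4]) (X.reverse ++ [4]) rfl _ _,
      lex_append_iff (sEnc k i) (sEnc k c) (by rw [sEnc_length, sEnc_length]) rest []]
    have hnl : ¬ (X.reverse ++ [4]) < (X.reverse ++ [4]) := lt_irrefl _
    have hnr : ¬ rest < ([] : List ℕ) := List.not_lt_nil _
    rw [sEnc_lt_iff k i c hi hc]
    tauto
  set Iset : Set ℕ := {i : ℕ | b ≤ i ∧ i < e ∧ X <+: W (i + 1)} with hIset
  set f : ℕ → ℕ := fun i => i * L + (ℓ - K) + 1 with hf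
  have hfinj : Function.Injective f := by
    have hmono : StrictMono f := by
      intro a1 a2 ha
      simp only [hf]
      have h1 : a1 * L < a2 * L := (Nat.mul_lt_mul_right hL0).mpr ha
      omega
    exact hmono.injective
  have hmain : LexRange (X.reverse ++ [4] ++ sEnc k b) (X.reverse ++ [4] ++ sEnc k e)
      (SeqToString m W) = f '' Iset := by
    ext j
    simp only [LexRange, Set.mem_setOf_eq, Set.mem_image]
    constructor
    · rintro ⟨hj1, hj2, hP1, hP2⟩
      rw [hlexle] at hP1
      rw [hlexlt] at hP2
      rw [hTlen] at hj2
      obtain ⟨i, t, hi, ht, hjeq⟩ : ∃ i t, i < m ∧ t < L ∧ j = i * L + t + 1 := by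
        refine ⟨(j - 1) / L, (j - 1) % L, ?_, Nat.mod_lt _ hL0, ?_⟩
        · exact Nat.div_lt_of_lt_mul (by rw [Nat.mul_comm]; omega)
        · have hdm := Nat.div_add_mod (j - 1) L
          calc j = (j - 1) + 1 := by omega
            _ = (L * ((j - 1) / L) + (j - 1) % L) + 1 := by rw [hdm]
            _ = (j - 1) / L * L + (j - 1) % L + 1 := by rw [Nat.mul_comm]
      subst hjeq
      have hS := hsuf i t hi ht
      have hpre : (X.reverse ++ [4]) <+: Suf (SeqToString m W) (i * L + t + 1) :=
        prefix_of_between _ _ (sEnc k b) (sEnc k e) hP1 hP2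
      have hget : (Suf (SeqToString m W) (i * L + t + 1))[K]? = some 4 := by
        obtain ⟨r, hr⟩ := hpre
        have hc1 : K < (X.reverse ++ [4]).length := by
          simp only [List.length_append, List.length_reverse, List.length_cons,
            List.length_nil, hKdef]
          omega
        have hc2 : ¬ K < X.reverse.length := by simp [hKdef]
        rw [← hr, List.getElem?_append, if_pos hc1, List.getElem?_append, if_neg hc2]
        simp [hKdef]
      rw [hS] at hget
      have hblkL : (blk i).length = L := hblklen i hi
      have htK : t + K = ℓ := by
        by_contra hne
        rcases Nat.lt_or_ge (t + K) L with hcase | hcase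
        · rw [List.getElem?_append,
            if_pos (by rw [List.length_drop, hblkL]; omega),
            List.getElem?_drop] at hget
          rcases Nat.lt_trichotomy (t + K) ℓ with h1 | h1 | h1
          · obtain ⟨a, ha, ha2⟩ := hblkget1 i (t + K) hi h1
            rw [ha] at hget
            simp at hget
            omega
          · exact hne h1
          · obtain ⟨a, ha, ha2⟩ := hblkget2 i (t + K) hi h1 hcase
            rw [ha] at hget
            simp at hget
            omega
        · rw [List.getElem?_append,
            if_neg (by rw [List.length_drop, hblkL]; omega),
            List.length_drop, hblkL] at hget
          rcases Nat.lt_or_ge (i + 1) m with him | him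
          · have hc3 : i + 1 < Bs.length := by
              simp only [hBsdef, List.length_map, List.length_range]
              omega
            have hd : Bs.drop (i + 1) = blk (i + 1) :: Bs.drop (i + 2) := by
              rw [List.drop_eq_getElem_cons hc3]
              congr 1
              simp [hBsdef]
            rw [hd, List.flatten_cons, List.getElem?_append,
              if_pos (by rw [hblklen (i + 1) him]; omega)] at hget
            obtain ⟨a, ha, ha2⟩ := hblkget1 (i + 1) (K - (L - t)) him (by omega)
            rw [ha] at hget
            simp at hget
            omega
          · have hc4 : Bs.length ≤ i + 1 := by
              simp only [hBsdef, List.length_map, List.length_range]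
              omega
            have hd : Bs.drop (i + 1) = [] := List.drop_eq_nil_of_le hc4
            rw [hd] at hget
            simp at hget
      have ht' : t = ℓ - K := by omega
      subst ht'
      rw [hblkdrop i hi] at hS
      have hXtake : X = (W (i + 1)).take K := by
        obtain ⟨r, hr⟩ := hpre
        rw [hS] at hr
        have hr2 : (X.reverse ++ [4]) ++ r
            = (((W (i + 1)).take K).reverse ++ [4]) ++ (sEnc k i ++ (Bs.drop (i + 1)).flatten) := by
          rw [hr]
          simp only [List.append_assoc]
        have hlen : (X.reverse ++ [4]).length = (((W (i + 1)).take K).reverse ++ [4]).length := by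
          simp only [List.length_append, List.length_reverse, List.length_cons,
            List.length_nil, List.length_take, hWlen' i hi]
          omega
        obtain ⟨h1, _⟩ := List.append_inj hr2 hlen
        have h2 : X.reverse = ((W (i + 1)).take K).reverse := List.append_cancel_right h1
        exact List.reverse_injective h2
      have hXpre : X <+: W (i + 1) := hXtake ▸ List.take_prefix K (W (i + 1))
      rw [← hXtake] at hS
      rw [hS] at hP1 hP2
      have hi2k : i < 2 ^ k := lt_trans hi hm2k
      have hb2k : b < 2 ^ k := by omega
      have he2k : e ≤ m := he
      have hie : i < e := (horder _ i e hi2k (by omega)).mp hP2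
      have hbi : b ≤ i := by
        by_contra hlt
        have hc : (X.reverse ++ [4] ++ sEnc k i ++ (Bs.drop (i + 1)).flatten)
            < (X.reverse ++ [4] ++ sEnc k b) := (horder _ i b hi2k hb2k).mpr (by omega)
        exact absurd (lt_of_le_of_lt hP1 hc) (lt_irrefl _)
      exact ⟨i, ⟨hbi, hie, hXpre⟩, rfl⟩
    · rintro ⟨i, ⟨hbi, hie, hXpre⟩, rfl⟩
      have him : i < m := lt_of_lt_of_le hie he
      have hi2k : i < 2 ^ k := lt_trans him hm2k
      have hb2k : b < 2 ^ k := by omega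
      have he2k : e < 2 ^ k := by omega
      have hS := hsuf i (ℓ - K) him (by omega)
      have hXtake : X = (W (i + 1)).take K := by
        rw [hKdef]
        exact List.prefix_iff_eq_take.mp hXpre
      rw [hblkdrop i him, ← hXtake] at hS
      have hj1 : 1 ≤ f i := Nat.succ_le_succ (Nat.zero_le _)
      have hj2 : f i ≤ m * L := by
        calc f i = i * L + ((ℓ - K) + 1) := Nat.add_assoc (i * L) (ℓ - K) 1
          _ ≤ i * L + L := Nat.add_le_add_left (by omega) _
          _ = (i + 1) * L := by ring
          _ ≤ m * L := Nat.mul_le_mul_right L (by omega)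
      have hfi : f i = i * L + (ℓ - K) + 1 := rfl
      refine ⟨hj1, by rw [hTlen]; exact hj2, ?_, ?_⟩
      · rw [hlexle, hfi, hS]
        apply le_of_not_gt
        rw [show (X.reverse ++ [4] ++ sEnc k i) ++ (Bs.drop (i + 1)).flatten
          = X.reverse ++ [4] ++ sEnc k i ++ (Bs.drop (i + 1)).flatten from rfl]
        rw [horder _ i b hi2k hb2k]
        omega
      · rw [hlexlt, hfi, hS]
        rw [show (X.reverse ++ [4] ++ sEnc k i) ++ (Bs.drop (i + 1)).flatten
          = X.reverse ++ [4] ++ sEnc k i ++ (Bs.drop (i + 1)).flatten from rfl]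
        rw [horder _ i e hi2k he2k]
        exact hie
  rw [hmain, Set.ncard_image_of_injective _ hfinj]
  show ({i : ℕ | 1 ≤ i ∧ i ≤ e ∧ X <+: W i}.ncard
    - {i : ℕ | 1 ≤ i ∧ i ≤ b ∧ X <+: W i}.ncard) = Iset.ncard
  set Ae : Set ℕ := {i : ℕ | 1 ≤ i ∧ i ≤ e ∧ X <+: W i} with hAe
  set Ab : Set ℕ := {i : ℕ | 1 ≤ i ∧ i ≤ b ∧ X <+: W i} with hAb
  have hsub : Ab ⊆ Ae := by
    intro i hi
    obtain ⟨h1, h2, h3⟩ := hi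
    exact ⟨h1, by omega, h3⟩
  have hfinAe : Ae.Finite := (Set.finite_Icc 1 e).subset (fun i hi => ⟨hi.1, hi.2.1⟩)
  have hfinAb : Ab.Finite := hfinAe.subset hsub
  have hdiff := Set.ncard_diff hsub hfinAb
  rw [← hdiff]
  have himg : Ae \ Ab = (fun i => i + 1) '' Iset := by
    ext i
    simp only [hAe, hAb, hIset, Set.mem_diff, Set.mem_setOf_eq, Set.mem_image]
    constructor
    · rintro ⟨⟨h1, h2, h3⟩, h4⟩
      have hbi : b < i := by
        by_contra h
        push_neg at h
        exact h4 ⟨h1, h, h3⟩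
      refine ⟨i - 1, ⟨by omega, by omega, ?_⟩, by omega⟩
      rw [show i - 1 + 1 = i by omega]
      exact h3
    · rintro ⟨i', ⟨h1, h2, h3⟩, rfl⟩
      exact ⟨⟨by omega, by omega, h3⟩, fun hc => by omega⟩
  rw [himg, Set.ncard_image_of_injective _ (fun a1 a2 h => by omega)]
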